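/- Let X be a nonempty Hausdorff scattered space and let k be a natural number with k ≤ rank_CB(X). Then for each point x ∈ X^(k), the stalk at x of coker δ_{k−1} in the Godement resolution of the constant sheaf cℚ is nonzero: (coker δ_{k−1})_x ≠ 0. Moreover, if X is any Hausdorff space with nonempty perfect hull, then for every natural number k and every x ∈ X^(k) one has (coker δ_{k−1})_x ≠ 0 (where coker δ_{−1} is understood as cℚ itself). -/

import Mathlib

open CategoryTheory CategoryTheory.Limits TopCat TopologicalSpace Opposite

attribute [local instance] Classical.propDecidable

noncomputable section

/-- The Cantor–Bendixson derivative of a set `A`: the set of points of `A` that are not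
isolated in the subspace `A`, i.e. the points of `A` that are accumulation points of `A`. -/
def cbDeriv {X : Type*} [TopologicalSpace X] (A : Set X) : Set X :=
  {x ∈ A | AccPt x (Filter.principal A)}

/-- The finite Cantor–Bendixson derivatives of the space: `cbIter X k = X^(k)`. -/
def cbIter (X : Type*) [TopologicalSpace X] (k : ℕ) : Set X :=
  cbDeriv^[k] Set.univ

/-- A subset `S` of a topological space is scattered if every nonempty subset `T ⊆ S`
has a point that is isolated in `T`. -/
def IsScatteredSet {X : Type*} [TopologicalSpace X] (S : Set X) : Prop :=
  ∀ T ⊆ S, T.Nonempty → ∃ x ∈ T, ¬ AccPt x (Filter.principal T)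

/-- The abelian category of sheaves of `ℚ`-modules on the topological space `X`. -/
abbrev SheafQ (X : TopCat.{0}) : Type 1 :=
  Sheaf (Opens.grothendieckTopology X) (ModuleCat.{0} ℚ)

variable (X : TopCat.{0})

/-- The skyscraper sheaf `ι_x(M)` at the point `x` with value the `ℚ`-module `M`. -/
def skyQ (x : X) (M : ModuleCat.{0} ℚ) : SheafQ X := skyscraperSheaf x M

/-- The stalk `F_x` of a sheaf of `ℚ`-modules at a point `x`. -/
def stalkAt (F : SheafQ X) (x : X) : ModuleCat.{0} ℚ := TopCat.Presheaf.stalk F.val x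

/-- The zeroth term of the Godement resolution: `C^0(F) = ∏_{y ∈ X} ι_y(F_y)`. -/
def godC0 (F : SheafQ X) : SheafQ X := ∏ᶜ fun y : X => skyQ X y (stalkAt X F y)

/-- The canonical monomorphism `δ_0 : F ⟶ C^0(F)` sending a section to its family of germs. -/
def godDelta0 (F : SheafQ X) : F ⟶ godC0 X F :=
  Limits.Pi.lift fun y : X => (stalkSkyscraperSheafAdjunction y).unit.app F

/-- The cokernel sequence of the Godement resolution of `F`:
`godCoker F k = coker δ_{k-1}`, with `godCoker F 0 = F` (i.e. `coker δ_{-1}` is `F` itself)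
and `godCoker F (k+1) = coker (δ : godCoker F k ⟶ C^0(godCoker F k))`. -/
def godCoker (F : SheafQ X) : ℕ → SheafQ X
  | 0 => F
  | k + 1 => cokernel (godDelta0 X (godCoker F k))

/-- The constant sheaf `cℚ` of `ℚ`-modules at `ℚ` on `X`. -/
def constQ : SheafQ X :=
  (constantSheaf (Opens.grothendieckTopology X) (ModuleCat.{0} ℚ)).obj (ModuleCat.of ℚ ℚ)


namespace Stmt8Aux

variable (X : TopCat.{0})



def fam (F : SheafQ X) : X → SheafQ X := fun y => skyQ X y (stalkAt X F y)

def E : SheafQ X ⥤ ModuleCat.{0} ℚ :=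
  sheafToPresheaf _ _ ⋙ (evaluation (Opens ↑X)ᵒᵖ (ModuleCat.{0} ℚ)).obj (op ⊤)

instance (F : SheafQ X) : PreservesLimit (Discrete.functor (fam X F)) (E X) := by
  unfold E; infer_instance

def secIso (F : SheafQ X) :
    (E X).obj (godC0 X F) ≅ ModuleCat.of ℚ (∀ y : X, (E X).obj (fam X F y)) :=
  PreservesProduct.iso (E X) (fam X F) ≪≫ ModuleCat.piIsoPi _

lemma secIso_inv_comp (F : SheafQ X) (y : X) :
    (secIso X F).inv ≫ (E X).map (Pi.π (fam X F) y)
      = ModuleCat.ofHom (LinearMap.proj y : (∀ i : X, ((E X).obj (fam X F i))) →ₗ[ℚ] _) := by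
  erw [← piComparison_comp_π, ← PreservesProduct.iso_hom]
  simp only [secIso, Iso.trans_inv, Category.assoc, Iso.inv_hom_id_assoc]
  erw [Iso.trans_inv, Category.assoc, Iso.inv_hom_id_assoc]
  exact ModuleCat.piIsoPi_inv_kernel_ι (fun i => (E X).obj (fam X F i)) y

lemma secIso_inv_π (F : SheafQ X) (t : ∀ y : X, (E X).obj (fam X F y)) (y : X) :
    (Pi.π (fam X F) y).hom.app (op ⊤) ((secIso X F).inv t) = t y := by
  have := ConcreteCategory.congr_hom (secIso_inv_comp X F y) t
  exact this


def L (X : TopCat.{0}) (x : X) : SheafQ X ⥤ ModuleCat.{0} ℚ :=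
  Sheaf.forget (ModuleCat.{0} ℚ) X ⋙ TopCat.Presheaf.stalkFunctor _ x

theorem exists_ne_zero {A : ModuleCat.{0} ℚ} (hA : ¬ IsZero A) : ∃ a : A, a ≠ 0 := by
  by_contra hcon
  push_neg at hcon
  haveI : Subsingleton A := ⟨fun a b => by rw [hcon a, hcon b]⟩
  exact hA (ModuleCat.isZero_of_subsingleton A)

theorem eqToHom_inj {A B : ModuleCat.{0} ℚ} (h : A = B) {a b : A}
    (H : eqToHom h a = eqToHom h b) : a = b := by subst h; simpa using H

def skyElt (y : X) (M : ModuleCat.{0} ℚ) {U : Opens ↑X} (h : y ∈ U) (ξ : M) :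
    (skyscraperPresheaf y M).obj (op U) :=
  (eqToHom ((if_pos h).symm) : M ⟶ (skyscraperPresheaf y M).obj (op U)) ξ

lemma sky_res (y : X) (M : ModuleCat.{0} ℚ) {U V : Opens ↑X} (i : V ⟶ U) (hyV : y ∈ V)
    (hyU : y ∈ U) (ξ : M) :
    (skyscraperPresheaf y M).map i.op (skyElt X y M hyU ξ) = skyElt X y M hyV ξ := by
  have h1 : (eqToHom ((if_pos hyU).symm) : M ⟶ (skyscraperPresheaf y M).obj (op U)) ≫
      (skyscraperPresheaf y M).map i.op = eqToHom ((if_pos hyV).symm) := by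
    rw [skyscraperPresheaf_map, dif_pos hyV]; exact eqToHom_trans _ _
  exact ConcreteCategory.congr_hom h1 ξ

theorem key (F : SheafQ X) (S : Set ↑X) (hS : ∀ y ∈ S, ¬ IsZero (stalkAt X F y))
    {x : ↑X} (hx : AccPt x (Filter.principal S)) :
    ¬ IsZero (stalkAt X (cokernel (godDelta0 X F)) x) := by
  intro h
  haveI := (stalkSkyscraperSheafAdjunction (C := ModuleCat.{0} ℚ) x).leftAdjoint_preservesColimits
  haveI : (L X x).IsLeftAdjoint := (stalkSkyscraperSheafAdjunction x).isLeftAdjoint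
  have hz : IsZero (cokernel ((L X x).map (godDelta0 X F))) :=
    h.of_iso (PreservesCokernel.iso (L X x) _).symm
  have hepi : Epi ((L X x).map (godDelta0 X F)) := Preadditive.epi_of_isZero_cokernel _ hz
  rw [ModuleCat.epi_iff_surjective] at hepi
  let m : ∀ y : ↑X, stalkAt X F y := fun y =>
    if h : y ∈ S ∧ y ≠ x then (exists_ne_zero (hS y h.1)).choose else 0
  have hmne : ∀ y, y ∈ S → y ≠ x → m y ≠ 0 := fun y h1 h2 => by
    simp only [m, dif_pos (And.intro h1 h2)]
    exact (exists_ne_zero (hS y h1)).choose_spec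
  have hmx : m x = 0 := by
    simp only [m]; rw [dif_neg]; simp
  let t : ∀ y : ↑X, (E X).obj (fam X F y) := fun y =>
    skyElt X y (stalkAt X F y) (trivial : y ∈ (⊤ : Opens ↑X)) (m y)
  let T : (godC0 X F).val.obj (op ⊤) := (secIso X F).inv t
  obtain ⟨σ₀, hσ₀⟩ := hepi (TopCat.Presheaf.germ (godC0 X F).val ⊤ x _root_.trivial T)
  obtain ⟨V, hxV, σ, rfl⟩ := TopCat.Presheaf.germ_exist (X := X) F.val (x := x) σ₀
  have hσ₁ : TopCat.Presheaf.germ (godC0 X F).val V x hxV ((godDelta0 X F).hom.app (op V) σ)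
      = TopCat.Presheaf.germ (godC0 X F).val ⊤ x _root_.trivial T := by
    refine Eq.trans ?_ hσ₀
    exact (ConcreteCategory.congr_hom
      (TopCat.Presheaf.stalkFunctor_map_germ (C := ModuleCat.{0} ℚ) V x hxV
        (godDelta0 X F).hom) σ).symm
  obtain ⟨W, hxW, iV, iT, hW⟩ :=
    TopCat.Presheaf.germ_eq (X := X) (godC0 X F).val x hxV (show x ∈ (⊤ : Opens ↑X) from _root_.trivial) _ _ hσ₁
  have main : ∀ y, ∀ hyW : y ∈ W, TopCat.Presheaf.germ F.val V y (leOfHom iV hyW) σ = m y := by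
    intro y hyW
    have hyV : y ∈ V := leOfHom iV hyW
    have happ : (Pi.π (fam X F) y).hom.app (op W)
          ((godC0 X F).val.map iV.op ((godDelta0 X F).hom.app (op V) σ))
        = (Pi.π (fam X F) y).hom.app (op W) ((godC0 X F).val.map iT.op T) :=
      congrArg _ hW
    have h4 : godDelta0 X F ≫ Pi.π (fam X F) y =
        (stalkSkyscraperSheafAdjunction y).unit.app F := Pi.lift_π _ _
    have h5 : (godDelta0 X F).hom ≫ (Pi.π (fam X F) y).hom =
        StalkSkyscraperPresheafAdjunctionAuxs.toSkyscraperPresheaf y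
          (𝟙 (TopCat.Presheaf.stalk F.val y)) := congrArg (fun f => f.hom) h4
    have e2 : (godDelta0 X F).hom.app (op V) ≫ (Pi.π (fam X F) y).hom.app (op V)
        = TopCat.Presheaf.germ F.val V y hyV ≫ eqToHom ((if_pos hyV).symm) := by
      refine Eq.trans (NatTrans.congr_app h5 (op V)) ?_
      rw [StalkSkyscraperPresheafAdjunctionAuxs.toSkyscraperPresheaf_app]
      exact (dif_pos hyV).trans (by rw [Category.id_comp]; exact rfl)
    have a1 : (Pi.π (fam X F) y).hom.app (op W)
          ((godC0 X F).val.map iV.op ((godDelta0 X F).hom.app (op V) σ))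
        = (fam X F y).val.map iV.op
          ((Pi.π (fam X F) y).hom.app (op V) ((godDelta0 X F).hom.app (op V) σ)) :=
      ConcreteCategory.congr_hom ((Pi.π (fam X F) y).hom.naturality iV.op) _
    have a2 : (Pi.π (fam X F) y).hom.app (op V) ((godDelta0 X F).hom.app (op V) σ)
        = skyElt X y (stalkAt X F y) hyV (TopCat.Presheaf.germ F.val V y hyV σ) :=
      ConcreteCategory.congr_hom e2 σ
    have a3 : (fam X F y).val.map iV.op (skyElt X y (stalkAt X F y) hyV (TopCat.Presheaf.germ F.val V y hyV σ))
        = skyElt X y (stalkAt X F y) hyW (TopCat.Presheaf.germ F.val V y hyV σ) :=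
      sky_res X y _ iV hyW hyV _
    have b1 : (Pi.π (fam X F) y).hom.app (op W) ((godC0 X F).val.map iT.op T)
        = (fam X F y).val.map iT.op ((Pi.π (fam X F) y).hom.app (op ⊤) T) :=
      ConcreteCategory.congr_hom ((Pi.π (fam X F) y).hom.naturality iT.op) _
    have b2 : (Pi.π (fam X F) y).hom.app (op ⊤) T
        = skyElt X y (stalkAt X F y) (U := ⊤) _root_.trivial (m y) := secIso_inv_π X F t y
    have b3 : (fam X F y).val.map iT.op (skyElt X y (stalkAt X F y) (U := ⊤) _root_.trivial (m y))
        = skyElt X y (stalkAt X F y) hyW (m y) := sky_res X y _ iT hyW _root_.trivial _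
    have final : skyElt X y (stalkAt X F y) hyW (TopCat.Presheaf.germ F.val V y hyV σ)
        = skyElt X y (stalkAt X F y) hyW (m y) := by
      exact a3.symm.trans ((congrArg (fun z => (fam X F y).val.map iV.op z) a2.symm).trans
        (a1.symm.trans (happ.trans (b1.trans
          ((congrArg (fun z => (fam X F y).val.map iT.op z) b2).trans b3)))))
    exact eqToHom_inj _ final
  have hσx : TopCat.Presheaf.germ F.val V x hxV σ = 0 := by
    have := main x hxW
    rw [hmx] at this
    exact this
  have h0 : TopCat.Presheaf.germ F.val V x hxV σ = TopCat.Presheaf.germ F.val V x hxV (0 : F.val.obj (op V)) := by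
    rw [hσx, map_zero]
  obtain ⟨W', hxW', i1, i2, hW'⟩ := TopCat.Presheaf.germ_eq (X := X) F.val x hxV hxV σ 0 h0
  obtain ⟨y, hy, hyx⟩ := accPt_iff_nhds.mp hx ((W' ⊓ W : Opens ↑X) : Set ↑X)
    ((W' ⊓ W).isOpen.mem_nhds ⟨hxW', hxW⟩)
  obtain ⟨hyWW, hyS⟩ := hy
  have hyW' : y ∈ W' := hyWW.1
  have hyW : y ∈ W := hyWW.2
  have hz1 : TopCat.Presheaf.germ F.val V y (leOfHom iV hyW) σ = 0 := by
    have s1 := (TopCat.Presheaf.germ_res_apply F.val i1 y hyW' σ).symm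
    have s2 := congrArg (fun ξ : F.val.obj (op W') => TopCat.Presheaf.germ F.val W' y hyW' ξ) hW'
    have s3 := TopCat.Presheaf.germ_res_apply F.val i2 y hyW' (0 : F.val.obj (op V))
    have s4 : TopCat.Presheaf.germ F.val V y (leOfHom i2 hyW') (0 : F.val.obj (op V)) = 0 :=
      map_zero _
    exact s1.trans (s2.trans (s3.trans s4))
  exact hmne y hyS hyx ((main y hyW).symm.trans hz1)


def stalkSheafifyIso (x : ↑X) :
    presheafToSheaf (Opens.grothendieckTopology X) (ModuleCat.{0} ℚ) ⋙ L X x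
      ≅ TopCat.Presheaf.stalkFunctor (ModuleCat.{0} ℚ) x :=
  Adjunction.leftAdjointUniq
    ((sheafificationAdjunction _ _).comp (stalkSkyscraperSheafAdjunction x))
    (skyscraperPresheafStalkAdjunction x)

theorem notIsZero_of_retract {A B : ModuleCat.{0} ℚ} (f : A ⟶ B) (g : B ⟶ A)
    (hfg : f ≫ g = 𝟙 A) (hA : ¬ IsZero A) : ¬ IsZero B := fun hB => hA <| by
  rw [IsZero.iff_id_eq_zero, ← hfg, hB.eq_zero_of_tgt f, zero_comp]

theorem ratNotZero : ¬ IsZero (ModuleCat.of ℚ ℚ) := fun h => by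
  have h0 := (Limits.IsZero.iff_id_eq_zero (ModuleCat.of ℚ ℚ)).mp h
  have h1 : (1 : ℚ) = 0 := by
    calc (1:ℚ) = (𝟙 (ModuleCat.of ℚ ℚ) : ModuleCat.of ℚ ℚ ⟶ _) (1:ℚ) := rfl
    _ = (0 : ModuleCat.of ℚ ℚ ⟶ ModuleCat.of ℚ ℚ) (1:ℚ) := by rw [h0]
    _ = 0 := rfl
  norm_num at h1

theorem constQ_stalk_ne_zero (x : ↑X) : ¬ IsZero (stalkAt X (constQ X) x) := by
  let P : TopCat.Presheaf (ModuleCat.{0} ℚ) X := (Functor.const _).obj (ModuleCat.of ℚ ℚ)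
  let e : stalkAt X (constQ X) x ≅ TopCat.Presheaf.stalk P x := (stalkSheafifyIso X x).app P
  let ε : TopCat.Presheaf.stalk P x ⟶ ModuleCat.of ℚ ℚ := colimit.desc _
    ⟨ModuleCat.of ℚ ℚ, { app := fun U => 𝟙 _, naturality := by intros; simp [P] }⟩
  have hge : TopCat.Presheaf.germ P ⊤ x _root_.trivial ≫ ε = 𝟙 _ := colimit.ι_desc _ _
  refine notIsZero_of_retract (TopCat.Presheaf.germ P ⊤ x _root_.trivial ≫ e.inv) (e.hom ≫ ε) ?_ ratNotZero
  rw [Category.assoc, e.inv_hom_id_assoc, hge]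

theorem mainAux (X : TopCat.{0}) : ∀ k : ℕ, ∀ x ∈ cbIter ↑X k,
    ¬ IsZero (stalkAt X (godCoker X (constQ X) k) x) := by
  intro k
  induction k with
  | zero => intro x _; exact constQ_stalk_ne_zero X x
  | succ k ih =>
    intro x hx
    rw [cbIter, Function.iterate_succ_apply'] at hx
    exact key X (godCoker X (constQ X) k) (cbIter ↑X k) (fun y hy => ih y hy) hx.2

end Stmt8Aux

/-- (i) If `X` is a nonempty Hausdorff scattered space and `k` is a natural
number with `k ≤ rank_CB(X)` (i.e. the Cantor–Bendixson process has not stabilised before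
stage `k`), then for each `x ∈ X^(k)` the stalk at `x` of `coker δ_{k-1}` in the Godement
resolution of the constant sheaf `cℚ` is nonzero.  (ii) If `X` is a Hausdorff space with a
nonempty perfect hull (equivalently, `X` contains a nonempty subset with no isolated points),
then the same conclusion holds for every natural number `k` and every `x ∈ X^(k)`.
Here `coker δ_{-1}` is understood as `cℚ` itself. -/
theorem stmt8 :
    (∀ (X : TopCat.{0}) [T2Space X], (Set.univ : Set X).Nonempty →
      IsScatteredSet (Set.univ : Set X) →
      ∀ k : ℕ, (∀ j < k, cbIter X (j + 1) ≠ cbIter X j) →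
      ∀ x ∈ cbIter X k, ¬ IsZero (stalkAt X (godCoker X (constQ X) k) x)) ∧
    (∀ (X : TopCat.{0}) [T2Space X], (∃ A : Set X, A.Nonempty ∧ Preperfect A) →
      ∀ k : ℕ, ∀ x ∈ cbIter X k, ¬ IsZero (stalkAt X (godCoker X (constQ X) k) x)) := by
  constructor
  · intro X _ _ _ k _ x hx
    exact Stmt8Aux.mainAux X k x hx
  · intro X _ _ k x hx
    exact Stmt8Aux.mainAux X k x hx

end
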